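/- For sequences x, y : ℕ → ℝ define (x ⋆ y)(n) = n! · Σ_{(k_1,k_2) ∈ ℕ², k_1+k_2 ≤ n} (−1)^{k_1+k_2+n} · x(k_1)·y(k_2) / (k_1! · k_2! · (n−k_1−k_2)!). Then for all x, y : ℕ → ℝ and all n ∈ ℕ: (x ⋆ y)(n+1) − (x ⋆ y)(n) = ((Δx) ⋆ y)(n) + (x ⋆ (Δy))(n), where (Δu)(n) = u(n+1) − u(n). That is, the forward difference operator Δ is a derivation with respect to the product ⋆. -/

import Mathlib

/-- The forward difference operator acting on sequences. -/
def fwdDiffSeq (u : ℕ → ℝ) : ℕ → ℝ := fun n => u (n + 1) - u n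

/-- The star product of the Rota algebra of the forward difference operator, expressed
in terms of lattice values. -/
noncomputable def rotaStar (x y : ℕ → ℝ) : ℕ → ℝ := fun n =>
  (Nat.factorial n : ℝ) *
    ∑ k ∈ (Finset.range (n + 1) ×ˢ Finset.range (n + 1)).filter
        (fun k => k.1 + k.2 ≤ n),
      (-1 : ℝ) ^ (k.1 + k.2 + n) * x k.1 * y k.2 /
        ((Nat.factorial k.1 : ℝ) * (Nat.factorial k.2 : ℝ) *
          (Nat.factorial (n - k.1 - k.2) : ℝ))

/-- The coefficient kernel of the star product, extended by zero. -/
noncomputable def cc (m a b : ℕ) : ℝ :=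
  if a + b ≤ m then
    (-1 : ℝ) ^ (a + b + m) * (Nat.factorial m : ℝ) /
      ((Nat.factorial a : ℝ) * (Nat.factorial b : ℝ) * (Nat.factorial (m - a - b) : ℝ))
  else 0

lemma cc_eq_zero {m a b : ℕ} (h : m < a + b) : cc m a b = 0 := if_neg (by omega)

lemma cc_of_le {m a b : ℕ} (h : a + b ≤ m) :
    cc m a b = (-1 : ℝ) ^ (a + b + m) * (Nat.factorial m : ℝ) /
      ((Nat.factorial a : ℝ) * (Nat.factorial b : ℝ) * (Nat.factorial (m - a - b) : ℝ)) :=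
  if_pos h

lemma neg_one_pow_eq {e c : ℕ} (h : ∃ k, e = 2 * k + c) : (-1 : ℝ) ^ e = (-1) ^ c := by
  obtain ⟨k, rfl⟩ := h
  rw [pow_add, pow_mul, neg_one_sq, one_pow, one_mul]

lemma rotaStar_eq (x y : ℕ → ℝ) (m M : ℕ) (hM : m + 1 ≤ M) :
    rotaStar x y m = ∑ a ∈ Finset.range M, ∑ b ∈ Finset.range M, cc m a b * x a * y b := by
  have hsub : Finset.range (m+1) ⊆ Finset.range M := Finset.range_subset_range.2 hM
  rw [rotaStar]
  rw [Finset.sum_filter, Finset.sum_product, Finset.mul_sum]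
  rw [eq_comm]
  rw [← Finset.sum_subset hsub (fun a _ ha => ?_)]
  · refine Finset.sum_congr rfl fun a ha => ?_
    rw [Finset.mul_sum]
    rw [← Finset.sum_subset hsub (fun b _ hb => ?_)]
    · refine Finset.sum_congr rfl fun b hb => ?_
      rw [cc]
      split_ifs with h
      · ring
      · simp
    · rw [cc_eq_zero (by simp at hb ⊢; omega)]; ring
  · refine Finset.sum_eq_zero fun b _ => ?_
    rw [cc_eq_zero (by simp at ha ⊢; omega)]; ring

lemma shift_sum (f : ℕ → ℝ) (c : ℕ → ℝ) (M n : ℕ) (hM : n + 2 ≤ M)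
    (hc : ∀ a, n < a → c a = 0) :
    ∑ a ∈ Finset.range M, c a * f (a + 1)
      = ∑ a ∈ Finset.range M, (if 1 ≤ a then c (a - 1) else 0) * f a := by
  obtain ⟨k, rfl⟩ : ∃ k, M = k + 1 := ⟨M - 1, by omega⟩
  rw [Finset.sum_range_succ' (fun a => (if 1 ≤ a then c (a - 1) else 0) * f a) k]
  rw [Finset.sum_range_succ]
  simp only [Nat.add_sub_cancel, if_pos (Nat.le_add_left 1 _), if_neg (by omega : ¬ (1:ℕ) ≤ 0)]
  rw [hc k (by omega)]
  ring

lemma key (n a b : ℕ) :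
    cc (n+1) a b + cc n a b
      = (if 1 ≤ a then cc n (a-1) b else 0) + (if 1 ≤ b then cc n a (b-1) else 0) := by
  rcases Nat.lt_or_ge (n+1) (a+b) with h | h
  · rw [cc_eq_zero h, cc_eq_zero (by omega : n < a + b)]
    have h1 : (if 1 ≤ a then cc n (a-1) b else 0) = 0 := by
      split_ifs with ha
      · exact cc_eq_zero (by omega)
      · rfl
    have h2 : (if 1 ≤ b then cc n a (b-1) else 0) = 0 := by
      split_ifs with hb
      · exact cc_eq_zero (by omega)
      · rfl
    rw [h1, h2]
  rcases Nat.lt_or_ge n (a+b) with h' | h'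
  · -- a + b = n + 1
    rcases a with _ | a' <;> rcases b with _ | b'
    · omega
    · -- a = 0, b = b'+1, n = b'
      obtain rfl : b' = n := by omega
      rw [if_neg (by omega : ¬ (1:ℕ) ≤ 0), if_pos (by omega : 1 ≤ b' + 1)]
      simp only [Nat.add_sub_cancel]
      rw [cc_of_le (by omega : 0 + (b'+1) ≤ b' + 1), cc_eq_zero (by omega : b' < 0 + (b'+1)),
          cc_of_le (by omega : 0 + b' ≤ b')]
      rw [show b' + 1 - 0 - (b'+1) = 0 from by omega, show b' - 0 - b' = 0 from by omega]
      rw [neg_one_pow_eq (c := 0) (e := 0 + (b'+1) + (b'+1)) ⟨b'+1, by omega⟩,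
          neg_one_pow_eq (c := 0) (e := 0 + b' + b') ⟨b', by omega⟩]
      simp only [Nat.factorial_zero, Nat.factorial_succ, pow_zero]
      push_cast
      have fn := Nat.factorial_ne_zero b'
      field_simp
      ring
    · -- b = 0, a = a'+1, n = a'
      obtain rfl : a' = n := by omega
      rw [if_pos (by omega : 1 ≤ a' + 1), if_neg (by omega : ¬ (1:ℕ) ≤ 0)]
      simp only [Nat.add_sub_cancel]
      rw [cc_of_le (by omega : (a'+1) + 0 ≤ a' + 1), cc_eq_zero (by omega : a' < (a'+1) + 0),
          cc_of_le (by omega : a' + 0 ≤ a')]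
      rw [show a' + 1 - (a'+1) - 0 = 0 from by omega, show a' - a' - 0 = 0 from by omega]
      rw [neg_one_pow_eq (c := 0) (e := (a'+1) + 0 + (a'+1)) ⟨a'+1, by omega⟩,
          neg_one_pow_eq (c := 0) (e := a' + 0 + a') ⟨a', by omega⟩]
      simp only [Nat.factorial_zero, Nat.factorial_succ, pow_zero]
      push_cast
      have fn := Nat.factorial_ne_zero a'
      field_simp
    · -- a = a'+1, b = b'+1, n = a'+b'+1
      obtain rfl : n = a' + b' + 1 := by omega
      rw [if_pos (by omega : 1 ≤ a' + 1), if_pos (by omega : 1 ≤ b' + 1)]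
      simp only [Nat.add_sub_cancel]
      rw [cc_of_le (by omega : (a'+1) + (b'+1) ≤ a' + b' + 1 + 1),
          cc_eq_zero (by omega : a' + b' + 1 < (a'+1) + (b'+1)),
          cc_of_le (by omega : a' + (b'+1) ≤ a' + b' + 1),
          cc_of_le (by omega : (a'+1) + b' ≤ a' + b' + 1)]
      rw [show a' + b' + 1 + 1 - (a'+1) - (b'+1) = 0 from by omega,
          show a' + b' + 1 - a' - (b'+1) = 0 from by omega,
          show a' + b' + 1 - (a'+1) - b' = 0 from by omega]
      rw [neg_one_pow_eq (c := 0) (e := (a'+1) + (b'+1) + (a' + b' + 1 + 1)) ⟨a'+b'+2, by omega⟩,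
          neg_one_pow_eq (c := 0) (e := a' + (b'+1) + (a' + b' + 1)) ⟨a'+b'+1, by omega⟩,
          neg_one_pow_eq (c := 0) (e := (a'+1) + b' + (a' + b' + 1)) ⟨a'+b'+1, by omega⟩]
      simp only [Nat.factorial_zero, Nat.factorial_succ, pow_zero]
      push_cast
      have fa := Nat.factorial_ne_zero a'
      have fb := Nat.factorial_ne_zero b'
      have fab := Nat.factorial_ne_zero (a' + b' + 1)
      field_simp
      ring
  · -- a + b ≤ n
    rcases a with _ | a' <;> rcases b with _ | b'
    · rw [cc_of_le (by omega : 0 + 0 ≤ n + 1), cc_of_le (by omega : 0 + 0 ≤ n)]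
      rw [show n + 1 - 0 - 0 = n + 1 from by omega, show n - 0 - 0 = n from by omega]
      rw [neg_one_pow_eq (c := n+1) (e := 0 + 0 + (n+1)) ⟨0, by omega⟩,
          neg_one_pow_eq (c := n) (e := 0 + 0 + n) ⟨0, by omega⟩]
      simp only [Nat.factorial_zero, pow_succ]
      have fn := Nat.factorial_ne_zero n
      have fn1 := Nat.factorial_ne_zero (n+1)
      field_simp
      simp
    · obtain ⟨c, rfl⟩ : ∃ c, n = b' + 1 + c := ⟨n - b' - 1, by omega⟩
      rw [if_neg (by omega : ¬ (1:ℕ) ≤ 0), if_pos (by omega : 1 ≤ b' + 1)]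
      simp only [Nat.add_sub_cancel]
      rw [cc_of_le (by omega : 0 + (b'+1) ≤ b' + 1 + c + 1),
          cc_of_le (by omega : 0 + (b'+1) ≤ b' + 1 + c),
          cc_of_le (by omega : 0 + b' ≤ b' + 1 + c)]
      rw [show b' + 1 + c + 1 - 0 - (b'+1) = c + 1 from by omega,
          show b' + 1 + c - 0 - (b'+1) = c from by omega,
          show b' + 1 + c - 0 - b' = c + 1 from by omega]
      rw [neg_one_pow_eq (c := c+1) (e := 0 + (b'+1) + (b' + 1 + c + 1)) ⟨b'+1, by omega⟩,
          neg_one_pow_eq (c := c) (e := 0 + (b'+1) + (b' + 1 + c)) ⟨b'+1, by omega⟩,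
          neg_one_pow_eq (c := c+1) (e := 0 + b' + (b' + 1 + c)) ⟨b', by omega⟩]
      simp only [Nat.factorial_zero, Nat.factorial_succ, pow_succ]
      push_cast
      have fb := Nat.factorial_ne_zero b'
      have fc := Nat.factorial_ne_zero c
      have f1 := Nat.factorial_ne_zero (b' + 1 + c)
      field_simp
      ring
    · obtain ⟨c, rfl⟩ : ∃ c, n = a' + 1 + c := ⟨n - a' - 1, by omega⟩
      rw [if_pos (by omega : 1 ≤ a' + 1), if_neg (by omega : ¬ (1:ℕ) ≤ 0)]
      simp only [Nat.add_sub_cancel]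
      rw [cc_of_le (by omega : (a'+1) + 0 ≤ a' + 1 + c + 1),
          cc_of_le (by omega : (a'+1) + 0 ≤ a' + 1 + c),
          cc_of_le (by omega : a' + 0 ≤ a' + 1 + c)]
      rw [show a' + 1 + c + 1 - (a'+1) - 0 = c + 1 from by omega,
          show a' + 1 + c - (a'+1) - 0 = c from by omega,
          show a' + 1 + c - a' - 0 = c + 1 from by omega]
      rw [neg_one_pow_eq (c := c+1) (e := (a'+1) + 0 + (a' + 1 + c + 1)) ⟨a'+1, by omega⟩,
          neg_one_pow_eq (c := c) (e := (a'+1) + 0 + (a' + 1 + c)) ⟨a'+1, by omega⟩,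
          neg_one_pow_eq (c := c+1) (e := a' + 0 + (a' + 1 + c)) ⟨a', by omega⟩]
      simp only [Nat.factorial_zero, Nat.factorial_succ, pow_succ]
      push_cast
      have fa := Nat.factorial_ne_zero a'
      have fc := Nat.factorial_ne_zero c
      have f1 := Nat.factorial_ne_zero (a' + 1 + c)
      field_simp
      ring
    · obtain ⟨c, rfl⟩ : ∃ c, n = a' + 1 + (b' + 1) + c := ⟨n - a' - b' - 2, by omega⟩
      rw [if_pos (by omega : 1 ≤ a' + 1), if_pos (by omega : 1 ≤ b' + 1)]
      simp only [Nat.add_sub_cancel]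
      rw [cc_of_le (by omega : (a'+1) + (b'+1) ≤ a' + 1 + (b'+1) + c + 1),
          cc_of_le (by omega : (a'+1) + (b'+1) ≤ a' + 1 + (b'+1) + c),
          cc_of_le (by omega : a' + (b'+1) ≤ a' + 1 + (b'+1) + c),
          cc_of_le (by omega : (a'+1) + b' ≤ a' + 1 + (b'+1) + c)]
      rw [show a' + 1 + (b'+1) + c + 1 - (a'+1) - (b'+1) = c + 1 from by omega,
          show a' + 1 + (b'+1) + c - (a'+1) - (b'+1) = c from by omega,
          show a' + 1 + (b'+1) + c - a' - (b'+1) = c + 1 from by omega,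
          show a' + 1 + (b'+1) + c - (a'+1) - b' = c + 1 from by omega]
      rw [neg_one_pow_eq (c := c+1) (e := (a'+1) + (b'+1) + (a' + 1 + (b'+1) + c + 1)) ⟨a'+b'+2, by omega⟩,
          neg_one_pow_eq (c := c) (e := (a'+1) + (b'+1) + (a' + 1 + (b'+1) + c)) ⟨a'+b'+2, by omega⟩,
          neg_one_pow_eq (c := c+1) (e := a' + (b'+1) + (a' + 1 + (b'+1) + c)) ⟨a'+b'+1, by omega⟩,
          neg_one_pow_eq (c := c+1) (e := (a'+1) + b' + (a' + 1 + (b'+1) + c)) ⟨a'+b'+1, by omega⟩]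
      simp only [Nat.factorial_zero, Nat.factorial_succ, pow_succ]
      push_cast
      have fa := Nat.factorial_ne_zero a'
      have fb := Nat.factorial_ne_zero b'
      have fc := Nat.factorial_ne_zero c
      have f1 := Nat.factorial_ne_zero (a' + 1 + (b' + 1) + c)
      field_simp
      ring
-- appended part, tested with full.lean content prepended
lemma shiftA (c : ℕ → ℕ → ℝ) (x y : ℕ → ℝ) (M n : ℕ) (hM : n + 2 ≤ M)
    (hc : ∀ a b, n < a + b → c a b = 0) :
    ∑ a ∈ Finset.range M, ∑ b ∈ Finset.range M, c a b * x (a + 1) * y b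
      = ∑ a ∈ Finset.range M, ∑ b ∈ Finset.range M,
          (if 1 ≤ a then c (a - 1) b else 0) * x a * y b := by
  have step1 : ∀ a, ∑ b ∈ Finset.range M, c a b * x (a + 1) * y b
      = (∑ b ∈ Finset.range M, c a b * y b) * x (a + 1) := by
    intro a
    rw [Finset.sum_mul]
    exact Finset.sum_congr rfl fun b _ => by ring
  simp only [step1]
  rw [show (∑ a ∈ Finset.range M, (∑ b ∈ Finset.range M, c a b * y b) * x (a+1))
      = ∑ a ∈ Finset.range M, (fun a => ∑ b ∈ Finset.range M, c a b * y b) a * x (a+1) from rfl]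
  rw [shift_sum x (fun a => ∑ b ∈ Finset.range M, c a b * y b) M n hM
      (fun a ha => Finset.sum_eq_zero fun b _ => by rw [hc a b (by omega)]; ring)]
  refine Finset.sum_congr rfl fun a _ => ?_
  split_ifs with h1
  · rw [Finset.sum_mul]
    exact Finset.sum_congr rfl fun b _ => by ring
  · rw [zero_mul]
    exact (Finset.sum_eq_zero fun b _ => by ring).symm

lemma shiftB (c : ℕ → ℕ → ℝ) (x y : ℕ → ℝ) (M n : ℕ) (hM : n + 2 ≤ M)
    (hc : ∀ a b, n < a + b → c a b = 0) :
    ∑ a ∈ Finset.range M, ∑ b ∈ Finset.range M, c a b * x a * y (b + 1)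
      = ∑ a ∈ Finset.range M, ∑ b ∈ Finset.range M,
          (if 1 ≤ b then c a (b - 1) else 0) * x a * y b := by
  refine Finset.sum_congr rfl fun a _ => ?_
  rw [show (∑ b ∈ Finset.range M, c a b * x a * y (b+1))
      = ∑ b ∈ Finset.range M, (fun b => c a b * x a) b * y (b+1) from rfl]
  rw [shift_sum y (fun b => c a b * x a) M n hM
      (fun b hb => by show c a b * x a = 0; rw [hc a b (by omega)]; ring)]
  refine Finset.sum_congr rfl fun b _ => ?_
  split_ifs with h1 <;> ring

theorem fwdDiff_leibniz_rotaStar (x y : ℕ → ℝ) (n : ℕ) :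
    rotaStar x y (n + 1) - rotaStar x y n =
      rotaStar (fwdDiffSeq x) y n + rotaStar x (fwdDiffSeq y) n := by
  rw [rotaStar_eq x y (n+1) (n+3) (by omega),
      rotaStar_eq x y n (n+3) (by omega),
      rotaStar_eq (fwdDiffSeq x) y n (n+3) (by omega),
      rotaStar_eq x (fwdDiffSeq y) n (n+3) (by omega)]
  simp only [fwdDiffSeq]
  have hcc : ∀ a b, n < a + b → cc n a b = 0 := fun a b h => cc_eq_zero h
  have e1 : ∑ a ∈ Finset.range (n+3), ∑ b ∈ Finset.range (n+3),
        cc n a b * (x (a+1) - x a) * y b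
      = (∑ a ∈ Finset.range (n+3), ∑ b ∈ Finset.range (n+3),
          (if 1 ≤ a then cc n (a-1) b else 0) * x a * y b)
        - ∑ a ∈ Finset.range (n+3), ∑ b ∈ Finset.range (n+3), cc n a b * x a * y b := by
    rw [← shiftA (cc n) x y (n+3) n (by omega) hcc, ← Finset.sum_sub_distrib]
    refine Finset.sum_congr rfl fun a _ => ?_
    rw [← Finset.sum_sub_distrib]
    exact Finset.sum_congr rfl fun b _ => by ring
  have e2 : ∑ a ∈ Finset.range (n+3), ∑ b ∈ Finset.range (n+3),
        cc n a b * x a * (y (b+1) - y b)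
      = (∑ a ∈ Finset.range (n+3), ∑ b ∈ Finset.range (n+3),
          (if 1 ≤ b then cc n a (b-1) else 0) * x a * y b)
        - ∑ a ∈ Finset.range (n+3), ∑ b ∈ Finset.range (n+3), cc n a b * x a * y b := by
    rw [← shiftB (cc n) x y (n+3) n (by omega) hcc, ← Finset.sum_sub_distrib]
    refine Finset.sum_congr rfl fun a _ => ?_
    rw [← Finset.sum_sub_distrib]
    exact Finset.sum_congr rfl fun b _ => by ring
  rw [e1, e2]
  have keysum : (∑ a ∈ Finset.range (n+3), ∑ b ∈ Finset.range (n+3),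
        cc (n+1) a b * x a * y b)
      + ∑ a ∈ Finset.range (n+3), ∑ b ∈ Finset.range (n+3), cc n a b * x a * y b
      = (∑ a ∈ Finset.range (n+3), ∑ b ∈ Finset.range (n+3),
          (if 1 ≤ a then cc n (a-1) b else 0) * x a * y b)
        + ∑ a ∈ Finset.range (n+3), ∑ b ∈ Finset.range (n+3),
            (if 1 ≤ b then cc n a (b-1) else 0) * x a * y b := by
    rw [← Finset.sum_add_distrib, ← Finset.sum_add_distrib]
    refine Finset.sum_congr rfl fun a _ => ?_
    rw [← Finset.sum_add_distrib, ← Finset.sum_add_distrib]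
    refine Finset.sum_congr rfl fun b _ => ?_
    have h := key n a b
    linear_combination (x a * y b) * h
  linarith [keysum]
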